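/- Let N ∈ ℕ and let g_1, …, g_N be measurable functions on ℝ³. Then for every ε > 0 there is a constant C_ε, independent of N and of the g_m, such that ‖ Σ_{m=1}^N M g_m ‖_{L^{10/3}(ℝ³)} ≤ C_ε N^ε ‖ Σ_{m=1}^N |g_m| ‖_{L^{10/3}(ℝ³)}. -/

import Mathlib

open MeasureTheory Real
open scoped ENNReal BigOperators

noncomputable section

/-- the (centered) Hardy–Littlewood maximal function, with values in `ℝ≥0∞` -/
def HLmax {n : ℕ} (g : EuclideanSpace ℝ (Fin n) → ℝ) (x : EuclideanSpace ℝ (Fin n)) : ℝ≥0∞ :=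
  ⨆ (r : ℝ) (_ : 0 < r),
    (volume (Metric.ball x r))⁻¹ * ∫⁻ y in Metric.ball x r, ENNReal.ofReal |g y|

open Metric Set
open scoped NNReal

section Aux
abbrev X3 : Type := EuclideanSpace ℝ (Fin 3)

/-- measurability of the averaging integral in the center -/
lemma measurable_ball_lintegral {u : X3 → ℝ≥0∞} (hu : Measurable u) (r : ℝ) :
    Measurable fun x : X3 => ∫⁻ y in ball x r, u y := by
  have key : ∀ x : X3, (∫⁻ y in ball x r, u y)
      = ∫⁻ y, ({p : X3 × X3 | dist p.2 p.1 < r}.indicator (fun p => u p.2)) (x, y) := by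
    intro x
    rw [← lintegral_indicator measurableSet_ball]
    refine lintegral_congr fun y => ?_
    by_cases h : y ∈ ball x r
    · rw [Set.indicator_of_mem h]
      exact (Set.indicator_of_mem (show (x,y) ∈ {p : X3 × X3 | dist p.2 p.1 < r} from
        mem_ball.mp h) (fun p => u p.2)).symm
    · rw [Set.indicator_of_notMem h]
      exact (Set.indicator_of_notMem (show (x,y) ∉ {p : X3 × X3 | dist p.2 p.1 < r} from
        fun hc => h (mem_ball.mpr hc)) (fun p => u p.2)).symm
  simp_rw [key]
  apply Measurable.lintegral_prod_right'
  apply Measurable.indicator (hu.comp measurable_snd)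
  have : IsOpen {p : X3 × X3 | dist p.2 p.1 < r} :=
    isOpen_lt (continuous_dist.comp (continuous_snd.prodMk continuous_fst)) continuous_const
  exact this.measurableSet

/-- the set-integral over a ball is the sup over rational subballs -/
lemma ball_lintegral_eq_iSup {u : X3 → ℝ≥0∞} (hu : Measurable u) (x : X3) (r : ℝ) :
    ∫⁻ y in ball x r, u y
      = ⨆ q : {q : ℚ // 0 < (q:ℝ) ∧ (q:ℝ) < r}, ∫⁻ y in ball x (q:ℝ), u y := by
  have hus : ∀ (s : ℝ), (∫⁻ y in ball x s, u y) = ∫⁻ y, (ball x s).indicator u y :=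
    fun s => (lintegral_indicator measurableSet_ball u).symm
  simp_rw [hus]
  rw [← lintegral_iSup_directed]
  · refine lintegral_congr fun y => ?_
    by_cases h : y ∈ ball x r
    · rw [Set.indicator_of_mem h]
      obtain ⟨q, hq1, hq2⟩ := exists_rat_btwn (mem_ball.mp h)
      have hq0 : 0 < (q:ℝ) := lt_of_le_of_lt dist_nonneg hq1
      refine le_antisymm ?_ (iSup_le fun p => Set.indicator_le (fun _ _ => le_rfl) y)
      refine le_trans ?_ (le_iSup _ (⟨q, hq0, hq2⟩ : {q : ℚ // 0 < (q:ℝ) ∧ (q:ℝ) < r}))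
      rw [Set.indicator_of_mem (mem_ball.mpr hq1)]
    · rw [Set.indicator_of_notMem h]
      refine (iSup_le fun p => ?_).antisymm zero_le |>.symm
      rw [Set.indicator_of_notMem]
      intro hc
      exact h (mem_ball.mpr (lt_trans (mem_ball.mp hc) p.2.2))
  · exact fun q => (hu.indicator measurableSet_ball).aemeasurable
  · intro q q'
    rcases le_total (q:ℝ) (q':ℝ) with h | h
    · exact ⟨q', fun y => Set.indicator_le_indicator_of_subset (ball_subset_ball h)
        zero_le y, le_refl _⟩
    · exact ⟨q, le_refl _, fun y => Set.indicator_le_indicator_of_subset (ball_subset_ball h)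
        zero_le y⟩



/-- maximal function of an `ℝ≥0∞`-valued function -/
def eM (u : X3 → ℝ≥0∞) (x : X3) : ℝ≥0∞ :=
  ⨆ (r : ℝ) (_ : 0 < r), (volume (ball x r))⁻¹ * ∫⁻ y in ball x r, u y

lemma vol_ball_pos (x : X3) {r : ℝ} (hr : 0 < r) : 0 < volume (ball x r) :=
  measure_ball_pos _ x hr

lemma vol_ball_ne_top (x : X3) (r : ℝ) : volume (ball x r) ≠ ∞ :=
  measure_ball_lt_top.ne

lemma avg_le_eM (u : X3 → ℝ≥0∞) (x : X3) {r : ℝ} (hr : 0 < r) :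
    (volume (ball x r))⁻¹ * ∫⁻ y in ball x r, u y ≤ eM u x := by
  exact le_iSup₂ (f := fun r (_ : 0 < r) => (volume (ball x r))⁻¹ * ∫⁻ y in ball x r, u y) r hr

lemma setLIntegral_le_eM (u : X3 → ℝ≥0∞) (x : X3) {r : ℝ} (hr : 0 < r) :
    ∫⁻ y in ball x r, u y ≤ volume (ball x r) * eM u x := by
  calc ∫⁻ y in ball x r, u y
      = volume (ball x r) * ((volume (ball x r))⁻¹ * ∫⁻ y in ball x r, u y) := by
        rw [← mul_assoc, ENNReal.mul_inv_cancel (vol_ball_pos x hr).ne' (vol_ball_ne_top x r),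
          one_mul]
    _ ≤ volume (ball x r) * eM u x :=
        mul_le_mul_right (avg_le_eM u x hr) _

lemma eM_mono {u v : X3 → ℝ≥0∞} (h : ∀ y, u y ≤ v y) (x : X3) : eM u x ≤ eM v x := by
  refine iSup₂_le fun r hr => ?_
  exact le_trans (mul_le_mul_right (lintegral_mono fun y => h y) _) (avg_le_eM v x hr)

lemma eM_add_le (u v : X3 → ℝ≥0∞) (hu : Measurable u) (x : X3) :
    eM (fun y => u y + v y) x ≤ eM u x + eM v x := by
  refine iSup₂_le fun r hr => ?_
  rw [lintegral_add_left hu _]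
  rw [mul_add]
  exact add_le_add (avg_le_eM u x hr) (avg_le_eM v x hr)

lemma eM_le_const {u : X3 → ℝ≥0∞} {c : ℝ≥0∞} (h : ∀ y, u y ≤ c) (x : X3) : eM u x ≤ c := by
  refine iSup₂_le fun r hr => ?_
  calc (volume (ball x r))⁻¹ * ∫⁻ y in ball x r, u y
      ≤ (volume (ball x r))⁻¹ * (c * volume (ball x r)) := by
        refine mul_le_mul_right ?_ _
        refine le_trans (lintegral_mono fun y => h y) ?_
        simp [Measure.restrict_apply, mul_comm]
    _ ≤ c := by
        rw [← mul_assoc, mul_comm _ c, mul_assoc]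
        rw [ENNReal.inv_mul_cancel (vol_ball_pos x hr).ne' (vol_ball_ne_top x r)]
        simp

lemma eM_eq_rat {u : X3 → ℝ≥0∞} (hu : Measurable u) (x : X3) :
    eM u x = ⨆ (q : ℚ) (_ : 0 < (q:ℝ)),
      (volume (ball x (q:ℝ)))⁻¹ * ∫⁻ y in ball x (q:ℝ), u y := by
  refine le_antisymm ?_ ?_
  · refine iSup₂_le fun r hr => ?_
    rw [ball_lintegral_eq_iSup hu x r, ENNReal.mul_iSup]
    refine iSup_le fun q => ?_
    have h1 : (volume (ball x r))⁻¹ ≤ (volume (ball x (q:ℝ)))⁻¹ :=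
      ENNReal.inv_le_inv.mpr (measure_mono (ball_subset_ball q.2.2.le))
    exact le_trans (mul_le_mul_left h1 _)
      (le_iSup₂ (f := fun (q : ℚ) (_ : 0 < (q:ℝ)) =>
        (volume (ball x (q:ℝ)))⁻¹ * ∫⁻ y in ball x (q:ℝ), u y) q q.2.1)
  · exact iSup₂_le fun q hq => avg_le_eM u x hq

lemma eM_measurable {u : X3 → ℝ≥0∞} (hu : Measurable u) : Measurable (eM u) := by
  have : eM u = fun x => ⨆ (q : ℚ) (_ : 0 < (q:ℝ)),
      (volume (ball x (q:ℝ)))⁻¹ * ∫⁻ y in ball x (q:ℝ), u y := funext fun x => eM_eq_rat hu x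
  rw [this]
  refine Measurable.iSup fun q => Measurable.iSup fun _ => ?_
  have hv : ∀ x : X3, volume (ball x (q:ℝ)) = volume (ball (0:X3) (q:ℝ)) :=
    fun x => Measure.addHaar_ball_center volume x _
  simp_rw [hv]
  exact Measurable.const_mul (measurable_ball_lintegral hu _) _

lemma vol_ball_six (x y : X3) (r : ℝ) (hr : 0 ≤ r) :
    volume (ball y (6 * r)) = 216 * volume (ball x r) := by
  rw [Measure.addHaar_ball_mul volume y (by norm_num : (0:ℝ) ≤ 6) r,
    Measure.addHaar_ball_center volume x r]
  congr 1
  rw [finrank_euclideanSpace_fin]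
  norm_num

lemma ball_est {u : X3 → ℝ≥0∞} (hu : Measurable u) (w : X3 → ℝ≥0∞) (lam : ℝ≥0∞)
    (x : X3) {r : ℝ} (hr : 0 < r)
    (h : lam * volume (ball x r) ≤ ∫⁻ y in ball x r, u y) :
    lam * ∫⁻ y in closedBall x (5*r), w y ≤ 216 * ∫⁻ y in ball x r, u y * eM w y := by
  set V := volume (ball x r) with hV
  have hV0 : V ≠ 0 := (vol_ball_pos x hr).ne'
  have hVt : V ≠ ∞ := vol_ball_ne_top x r
  set κ := ∫⁻ y in closedBall x (5*r), w y with hκ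
  have step1 : ∀ y ∈ ball x r, (216 * V)⁻¹ * κ ≤ eM w y := by
    intro y hy
    have hsub : closedBall x (5*r) ⊆ ball y (6*r) := by
      intro z hz
      have h1 : dist z x ≤ 5*r := mem_closedBall.mp hz
      have h2 : dist x y < r := by rw [dist_comm]; exact mem_ball.mp hy
      have : dist z y < 6*r := lt_of_le_of_lt (dist_triangle z x y) (by linarith)
      exact mem_ball.mpr this
    have hκle : κ ≤ 216 * V * eM w y := by
      calc κ ≤ ∫⁻ z in ball y (6*r), w z :=
            lintegral_mono_set hsub
        _ ≤ volume (ball y (6*r)) * eM w y := setLIntegral_le_eM w y (by linarith)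
        _ = 216 * V * eM w y := by rw [vol_ball_six x y r hr.le]
    calc (216 * V)⁻¹ * κ ≤ (216 * V)⁻¹ * (216 * V * eM w y) := mul_le_mul_right hκle _
      _ = eM w y := by
          rw [← mul_assoc, ENNReal.inv_mul_cancel (by simp [hV0]) (by
            refine ENNReal.mul_ne_top (by norm_num) hVt), one_mul]
  have step2 : (216 * V)⁻¹ * κ * (lam * V) ≤ ∫⁻ y in ball x r, u y * eM w y := by
    calc (216 * V)⁻¹ * κ * (lam * V)
        ≤ (216 * V)⁻¹ * κ * ∫⁻ y in ball x r, u y := by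
          exact mul_le_mul_right (by rw [mul_comm] at h ⊢; exact h) _
      _ = ∫⁻ y in ball x r, ((216 * V)⁻¹ * κ) * u y := by
          rw [lintegral_const_mul _ hu]
      _ ≤ ∫⁻ y in ball x r, u y * eM w y := by
          refine setLIntegral_mono' measurableSet_ball fun y hy => ?_
          rw [mul_comm]
          exact mul_le_mul_right (step1 y hy) _
  calc lam * κ = 216 * ((216 * V)⁻¹ * κ * (lam * V)) := by
        rw [ENNReal.mul_inv (Or.inl (by norm_num)) (Or.inl (by norm_num))]
        calc lam * κ = (216 * 216⁻¹) * (V⁻¹ * V) * (κ * lam) := by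
              rw [ENNReal.mul_inv_cancel (by norm_num) (by norm_num),
                ENNReal.inv_mul_cancel hV0 hVt, one_mul, one_mul, mul_comm]
          _ = 216 * (216⁻¹ * V⁻¹ * κ * (lam * V)) := by ring
    _ ≤ 216 * ∫⁻ y in ball x r, u y * eM w y := mul_le_mul_right step2 _

theorem eM_weak {u w : X3 → ℝ≥0∞} (hu : Measurable u) (hw : Measurable w) (lam : ℝ≥0∞) :
    lam * ∫⁻ x in {x | lam < eM u x}, w x ≤ 216 * ∫⁻ x, u x * eM w x := by
  classical
  set ν := volume.withDensity w with hν
  have hνap : ∀ s : Set X3, MeasurableSet s → ν s = ∫⁻ x in s, w x :=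
    fun s hs => withDensity_apply w hs
  set D : ℚ → Set X3 :=
    fun q => {x | lam * volume (ball x (q:ℝ)) < ∫⁻ y in ball x (q:ℝ), u y} with hD
  have hDmeas : ∀ q, MeasurableSet (D q) := by
    intro q
    have hv : ∀ x : X3, volume (ball x (q:ℝ)) = volume (ball (0:X3) (q:ℝ)) :=
      fun x => Measure.addHaar_ball_center volume x _
    simp only [hD, hv]
    exact measurableSet_lt measurable_const (measurable_ball_lintegral hu _)
  set E : ℝ → Set X3 := fun R => ⋃ (q : ℚ) (_ : 0 < (q:ℝ) ∧ (q:ℝ) < R), D q with hE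
  have hEmeas : ∀ R, MeasurableSet (E R) :=
    fun R => MeasurableSet.iUnion fun q => MeasurableSet.iUnion fun _ => hDmeas q
  have key : ∀ R : ℝ, lam * ν (E R) ≤ 216 * ∫⁻ x, u x * eM w x := by
    intro R
    have hch : ∀ x : X3, x ∈ E R → ∃ q : ℚ, (0 < (q:ℝ) ∧ (q:ℝ) < R) ∧
        lam * volume (ball x (q:ℝ)) < ∫⁻ y in ball x (q:ℝ), u y := by
      intro x hx
      simp only [hE, mem_iUnion, hD, mem_setOf_eq] at hx
      obtain ⟨q, hq1, hq2⟩ := hx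
      exact ⟨q, hq1, hq2⟩
    set rad : E R → ℝ := fun i => ((Classical.choose (hch i i.2) : ℚ) : ℝ) with hrad
    have hrad_pos : ∀ i : E R, 0 < rad i := fun i => (Classical.choose_spec (hch i i.2)).1.1
    have hrad_lt : ∀ i : E R, rad i < R := fun i => (Classical.choose_spec (hch i i.2)).1.2
    have hrad_est : ∀ i : E R,
        lam * volume (ball (i:X3) (rad i)) ≤ ∫⁻ y in ball (i:X3) (rad i), u y :=
      fun i => (Classical.choose_spec (hch i i.2)).2.le
    obtain ⟨v, hv_sub, hv_disj, hv_cov⟩ :=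
      Vitali.exists_disjoint_subfamily_covering_enlargement_closedBall
        (Set.univ : Set (E R)) (fun i => (i:X3)) rad R (fun a _ => (hrad_lt a).le) 5
        (by norm_num)
    have hv_cnt : Countable ↥v := by
      have hdisj : Pairwise (Function.onFun Disjoint fun j : ↥v => closedBall ((j:E R):X3) (rad j)) := by
        intro j k hjk
        exact hv_disj j.2 k.2 (Subtype.coe_ne_coe.mpr hjk)
      have := Measure.countable_meas_pos_of_disjoint_iUnion (μ := volume)
        (As := fun j : ↥v => closedBall ((j:E R):X3) (rad j))
        (fun j => measurableSet_closedBall) hdisj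
      have hall : {j : ↥v | 0 < volume (closedBall ((j:E R):X3) (rad j))} = Set.univ := by
        refine eq_univ_of_forall fun j => ?_
        exact lt_of_lt_of_le (vol_ball_pos _ (hrad_pos j))
          (measure_mono ball_subset_closedBall)
      rw [hall, Set.countable_univ_iff] at this
      exact this
    have hcover : E R ⊆ ⋃ j : ↥v, closedBall (((j:E R)):X3) (5 * rad (j:E R)) := by
      intro x hx
      obtain ⟨b, hb, hsub⟩ := hv_cov ⟨x, hx⟩ (mem_univ _)
      refine mem_iUnion.mpr ⟨⟨b, hb⟩, hsub ?_⟩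
      exact mem_closedBall_self (hrad_pos ⟨x, hx⟩).le
    have hdisjball : Pairwise (Function.onFun Disjoint fun j : ↥v => ball ((j:E R):X3) (rad (j:E R))) := by
      intro j k hjk
      exact Disjoint.mono ball_subset_closedBall ball_subset_closedBall
        (hv_disj j.2 k.2 (Subtype.coe_ne_coe.mpr hjk))
    calc lam * ν (E R)
        ≤ lam * ∑' j : ↥v, ν (closedBall ((j:E R):X3) (5 * rad (j:E R))) := by
          refine mul_le_mul_right (le_trans (measure_mono hcover) (measure_iUnion_le _)) _
      _ = ∑' j : ↥v, lam * ν (closedBall ((j:E R):X3) (5 * rad (j:E R))) :=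
          ENNReal.tsum_mul_left.symm
      _ ≤ ∑' j : ↥v, 216 * ∫⁻ y in ball ((j:E R):X3) (rad (j:E R)), u y * eM w y := by
          refine ENNReal.tsum_le_tsum fun j => ?_
          rw [hνap _ measurableSet_closedBall]
          exact ball_est hu w lam _ (hrad_pos _) (hrad_est _)
      _ = 216 * ∑' j : ↥v, ∫⁻ y in ball ((j:E R):X3) (rad (j:E R)), u y * eM w y :=
          ENNReal.tsum_mul_left
      _ = 216 * ∫⁻ y in ⋃ j : ↥v, ball ((j:E R):X3) (rad (j:E R)), u y * eM w y := by
          rw [lintegral_iUnion (fun j => measurableSet_ball) hdisjball]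
      _ ≤ 216 * ∫⁻ y, u y * eM w y :=
          mul_le_mul_right (setLIntegral_le_lintegral _ _) _
  -- conclude by monotone convergence along `R = n`
  have hset : {x | lam < eM u x} = ⋃ n : ℕ, E (n:ℝ) := by
    ext x
    simp only [mem_setOf_eq, mem_iUnion]
    constructor
    · intro hx
      rw [eM_eq_rat hu] at hx
      obtain ⟨q, hq, hlt⟩ := by
        simpa only [lt_iSup_iff] using hx
      have hV0 : volume (ball x (q:ℝ)) ≠ 0 := (vol_ball_pos x hq).ne'
      have hVt : volume (ball x (q:ℝ)) ≠ ∞ := vol_ball_ne_top x _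
      have hx' : lam * volume (ball x (q:ℝ)) < ∫⁻ y in ball x (q:ℝ), u y := by
        have := hlt
        rw [← ENNReal.div_eq_inv_mul] at this
        exact (ENNReal.lt_div_iff_mul_lt (Or.inl hV0) (Or.inl hVt)).mp this
      obtain ⟨n, hn⟩ := exists_nat_gt (q:ℝ)
      exact ⟨n, mem_iUnion.mpr ⟨q, mem_iUnion.mpr ⟨⟨hq, hn⟩, hx'⟩⟩⟩
    · rintro ⟨n, hx⟩
      simp only [hE, mem_iUnion, hD, mem_setOf_eq] at hx
      obtain ⟨q, hq, hx'⟩ := hx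
      have hV0 : volume (ball x (q:ℝ)) ≠ 0 := (vol_ball_pos x hq.1).ne'
      have hVt : volume (ball x (q:ℝ)) ≠ ∞ := vol_ball_ne_top x _
      have : lam < (volume (ball x (q:ℝ)))⁻¹ * ∫⁻ y in ball x (q:ℝ), u y := by
        rw [← ENNReal.div_eq_inv_mul]
        exact (ENNReal.lt_div_iff_mul_lt (Or.inl hV0) (Or.inl hVt)).mpr hx'
      exact lt_of_lt_of_le this (avg_le_eM u x hq.1)
  have hmono : Monotone fun n : ℕ => E (n:ℝ) := by
    intro a b hab
    refine iUnion_mono fun q => iUnion_subset fun hq => ?_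
    refine subset_iUnion_of_subset ⟨hq.1, lt_of_lt_of_le hq.2 (by exact_mod_cast hab)⟩
      subset_rfl
  rw [← hνap _ (by rw [hset]; exact MeasurableSet.iUnion fun n => hEmeas _), hset,
    hmono.measure_iUnion, ENNReal.mul_iSup]
  exact iSup_le fun n => key _

section Dyadic

lemma e2_ne_top (t : ℝ) : (2:ℝ≥0∞) ^ t ≠ ⊤ := by
  rcases le_or_gt 0 t with h | h
  · exact ENNReal.rpow_ne_top_of_nonneg h (by norm_num)
  · have : (2:ℝ≥0∞) ^ t ≤ (2:ℝ≥0∞) ^ (0:ℝ) :=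
      ENNReal.rpow_le_rpow_of_exponent_le (by norm_num) h.le
    rw [ENNReal.rpow_zero] at this
    exact (this.trans_lt (by norm_num)).ne

lemma e2_ne_zero (t : ℝ) : (2:ℝ≥0∞) ^ t ≠ 0 :=
  (ENNReal.rpow_pos (by norm_num) (by norm_num)).ne'

lemma e2_lt_e2 {s t : ℝ} (h : (2:ℝ≥0∞) ^ s < (2:ℝ≥0∞) ^ t) : s < t := by
  by_contra hc
  exact absurd (ENNReal.rpow_le_rpow_of_exponent_le (by norm_num) (not_lt.mp hc)) (not_le.mpr h)

/-- pointwise dyadic decomposition -/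
lemma pointwise_dyadic {q : ℝ} (hq : 0 < q) (t : ℝ≥0∞) :
    t ^ q ≤ (2:ℝ≥0∞) ^ (2*q) *
      ∑' k : ℤ, (if (2:ℝ≥0∞) ^ (k:ℝ) < t then ((2:ℝ≥0∞) ^ (k:ℝ)) ^ q else 0) := by
  rcases eq_or_ne t 0 with rfl | ht0
  · simp [ENNReal.zero_rpow_of_pos hq]
  rcases eq_or_ne t ⊤ with rfl | httop
  · have hS : (∑' k : ℤ, (if (2:ℝ≥0∞) ^ (k:ℝ) < ⊤ then ((2:ℝ≥0∞) ^ (k:ℝ)) ^ q else 0)) = ⊤ := by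
      refine top_le_iff.mp ?_
      calc (⊤:ℝ≥0∞) = ∑' _ : ℕ, (1:ℝ≥0∞) :=
            (ENNReal.tsum_const_eq_top_of_ne_zero one_ne_zero).symm
        _ ≤ ∑' j : ℕ, (if (2:ℝ≥0∞) ^ (((j:ℤ)):ℝ) < ⊤ then ((2:ℝ≥0∞) ^ (((j:ℤ)):ℝ)) ^ q else 0) := by
            refine ENNReal.tsum_le_tsum fun j => ?_
            rw [if_pos (lt_top_iff_ne_top.mpr (e2_ne_top _))]
            rw [← ENNReal.rpow_mul]
            rw [← ENNReal.rpow_zero (x := (2:ℝ≥0∞))]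
            exact ENNReal.rpow_le_rpow_of_exponent_le (by norm_num) (by positivity)
        _ ≤ _ := ENNReal.tsum_comp_le_tsum_of_injective
            (fun a b hab => by exact_mod_cast hab) _
    rw [ENNReal.top_rpow_of_pos hq, hS, ENNReal.mul_top (e2_ne_zero _)]
  -- main case
  obtain ⟨n, hn⟩ := ENNReal.exists_mem_Ico_zpow ht0 httop (by norm_num : (1:ℝ≥0∞) < 2)
    (by norm_num)
  have h1 : (2:ℝ≥0∞) ^ ((n:ℝ) - 1) < t := by
    refine lt_of_lt_of_le ?_ ((ENNReal.rpow_intCast 2 n).symm ▸ hn.1)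
    exact ENNReal.rpow_lt_rpow_of_exponent_lt (by norm_num) (by norm_num) (by linarith)
  have h2 : t < (2:ℝ≥0∞) ^ ((n:ℝ) + 1) := by
    have := hn.2
    rw [show ((n:ℝ) + 1) = (((n + 1 : ℤ)):ℝ) by push_cast; ring, ENNReal.rpow_intCast]
    exact this
  have key : t ^ q ≤ (2:ℝ≥0∞) ^ (2*q) * ((2:ℝ≥0∞) ^ ((n:ℝ) - 1)) ^ q := by
    have : t ^ q ≤ ((2:ℝ≥0∞) ^ ((n:ℝ) + 1)) ^ q := ENNReal.rpow_le_rpow h2.le hq.le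
    refine this.trans ?_
    rw [← ENNReal.rpow_mul, ← ENNReal.rpow_mul, ← ENNReal.rpow_add _ _ (by norm_num)
      (by norm_num)]
    refine ENNReal.rpow_le_rpow_of_exponent_le (by norm_num) ?_
    ring_nf
    nlinarith
  refine key.trans ?_
  refine mul_le_mul_right ?_ _
  refine le_trans ?_ (ENNReal.le_tsum (n - 1))
  rw [if_pos]
  · push_cast
    exact le_refl _
  · push_cast
    exact h1

/-- geometric tail bound -/
lemma dyadic_sum_bound {q : ℝ} (hq : 1 < q) (t : ℝ≥0∞) :
    ∑' k : ℤ, (2:ℝ≥0∞) ^ ((k:ℝ) * q - (k:ℝ) + 1) *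
      (if (2:ℝ≥0∞) ^ ((k:ℝ) - 1) < t then t else 0)
      ≤ (2:ℝ≥0∞) ^ q * (1 - (2:ℝ≥0∞) ^ (1 - q))⁻¹ * t ^ q := by
  have hr1 : (2:ℝ≥0∞) ^ (1 - q) < 1 := by
    have := ENNReal.rpow_lt_rpow_of_exponent_lt (x := 2) (y := 1 - q) (z := 0)
      (by norm_num) (by norm_num) (by linarith)
    simpa using this
  have hrinv0 : (1 - (2:ℝ≥0∞) ^ (1 - q))⁻¹ ≠ 0 := by
    simp only [ne_eq, ENNReal.inv_eq_zero]
    exact (lt_of_le_of_lt (tsub_le_self) (by norm_num : (1:ℝ≥0∞) < ⊤)).ne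
  rcases eq_or_ne t 0 with rfl | ht0
  · simp
  rcases eq_or_ne t ⊤ with rfl | httop
  · rw [ENNReal.top_rpow_of_pos (by linarith)]
    rw [ENNReal.mul_top (mul_ne_zero (e2_ne_zero q) hrinv0)]
    exact le_top
  obtain ⟨n, hn⟩ := ENNReal.exists_mem_Ico_zpow ht0 httop (by norm_num : (1:ℝ≥0∞) < 2)
    (by norm_num)
  have hub : t < (2:ℝ≥0∞) ^ ((n:ℝ) + 1) := by
    have := hn.2
    rw [show ((n:ℝ) + 1) = (((n + 1 : ℤ)):ℝ) by push_cast; ring, ENNReal.rpow_intCast]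
    exact this
  have hlb : (2:ℝ≥0∞) ^ (n:ℝ) ≤ t := by
    rw [ENNReal.rpow_intCast]
    exact hn.1
  set f : ℤ → ℝ≥0∞ := fun k => (2:ℝ≥0∞) ^ ((k:ℝ) * q - (k:ℝ) + 1) *
      (if (2:ℝ≥0∞) ^ ((k:ℝ) - 1) < t then t else 0) with hf
  have hsupp : Function.support f ⊆ Set.range (fun j : ℕ => n + 1 - (j:ℤ)) := by
    intro k hk
    have hkle : k ≤ n + 1 := by
      by_contra hc
      push_neg at hc
      have : (2:ℝ≥0∞) ^ ((k:ℝ) - 1) < t := by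
        by_contra hc2
        exact hk (by simp [hf, if_neg hc2])
      have := e2_lt_e2 (lt_trans this hub)
      have : (k:ℝ) < (n:ℝ) + 2 := by linarith
      have : (k:ℤ) < n + 2 := by exact_mod_cast this
      omega
    exact ⟨(n + 1 - k).toNat, by show n + 1 - ((n + 1 - k).toNat : ℤ) = k; omega⟩
  rw [← Function.Injective.tsum_eq (f := f) (g := fun j : ℕ => n + 1 - (j:ℤ))
    (fun a b hab => by
      have : n + 1 - (a:ℤ) = n + 1 - (b:ℤ) := hab
      omega) hsupp]
  have h2q : (2:ℝ≥0∞) ^ q = 2 * 2 ^ (q-1) := by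
    have := ENNReal.rpow_add (x := (2:ℝ≥0∞)) 1 (q-1) (by norm_num) (by norm_num)
    rw [ENNReal.rpow_one, show (1:ℝ) + (q-1) = q by ring] at this
    exact this
  have htq : t ^ q = t ^ (q-1) * t := by
    have := ENNReal.rpow_add_of_nonneg (x := t) (q-1) 1 (by linarith) zero_le_one
    rw [ENNReal.rpow_one, show (q-1) + (1:ℝ) = q by ring] at this
    exact this
  have hterm : ∀ j : ℕ, f (n + 1 - (j:ℤ))
      ≤ (2 * (2:ℝ≥0∞) ^ (((n:ℝ) + 1) * (q-1)) * t) * ((2:ℝ≥0∞) ^ ((1:ℝ)-q)) ^ j := by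
    intro j
    calc f (n + 1 - (j:ℤ))
        ≤ (2:ℝ≥0∞) ^ ((((n + 1 - (j:ℤ) : ℤ)):ℝ) * q - (((n + 1 - (j:ℤ) : ℤ)):ℝ) + 1) * t := by
          refine mul_le_mul_right ?_ _
          split <;> simp
      _ = (2 * (2:ℝ≥0∞) ^ (((n:ℝ) + 1) * (q-1)) * t) * ((2:ℝ≥0∞) ^ ((1:ℝ)-q)) ^ j := by
          rw [← ENNReal.rpow_natCast ((2:ℝ≥0∞) ^ ((1:ℝ)-q)) j, ← ENNReal.rpow_mul]
          rw [show (2:ℝ≥0∞) * 2 ^ (((n:ℝ) + 1) * (q-1)) * t * 2 ^ (((1:ℝ)-q) * (j:ℝ))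
              = ((2:ℝ≥0∞) ^ (1:ℝ) * 2 ^ (((n:ℝ) + 1) * (q-1)) * 2 ^ (((1:ℝ)-q) * (j:ℝ))) * t by
            rw [ENNReal.rpow_one]; ring]
          rw [← ENNReal.rpow_add _ _ (by norm_num) (by norm_num),
            ← ENNReal.rpow_add _ _ (by norm_num) (by norm_num)]
          congr 2
          push_cast
          ring
  refine le_trans (ENNReal.tsum_le_tsum hterm) ?_
  rw [ENNReal.tsum_mul_left, ENNReal.tsum_geometric]
  have h2n : (2:ℝ≥0∞) ^ (((n:ℝ) + 1) * (q-1)) ≤ 2 ^ (q-1) * t ^ (q-1) := by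
    have h2t : (2:ℝ≥0∞) ^ ((n:ℝ) + 1) ≤ 2 * t := by
      rw [ENNReal.rpow_add _ _ (by norm_num) (by norm_num), ENNReal.rpow_one, mul_comm]
      exact mul_le_mul_right hlb 2
    calc (2:ℝ≥0∞) ^ (((n:ℝ) + 1) * (q-1)) = ((2:ℝ≥0∞) ^ ((n:ℝ) + 1)) ^ (q-1) :=
          ENNReal.rpow_mul _ _ _
      _ ≤ (2 * t) ^ (q-1) := ENNReal.rpow_le_rpow h2t (by linarith)
      _ = (2:ℝ≥0∞) ^ (q-1) * t ^ (q-1) := ENNReal.mul_rpow_of_nonneg _ _ (by linarith)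
  calc 2 * (2:ℝ≥0∞) ^ (((n:ℝ) + 1) * (q-1)) * t * (1 - (2:ℝ≥0∞) ^ ((1:ℝ)-q))⁻¹
      ≤ 2 * ((2:ℝ≥0∞) ^ (q-1) * t ^ (q-1)) * t * (1 - (2:ℝ≥0∞) ^ ((1:ℝ)-q))⁻¹ :=
        mul_le_mul_left (mul_le_mul_left (mul_le_mul_right h2n 2) t) _
    _ = (2:ℝ≥0∞) ^ q * (1 - (2:ℝ≥0∞) ^ ((1:ℝ)-q))⁻¹ * t ^ q := by
        rw [h2q, htq]; ring

end Dyadic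

/-- truncation bound for the maximal function -/
lemma eM_trunc {u : X3 → ℝ≥0∞} (hu : Measurable u) (a : ℝ≥0∞) (x : X3) :
    eM u x ≤ eM (fun y => if a < u y then u y else 0) x + a := by
  have hptw : ∀ y, u y ≤ (if a < u y then u y else 0) + a := by
    intro y
    by_cases h : a < u y
    · rw [if_pos h]; exact le_add_right le_rfl
    · rw [if_neg h, zero_add]; exact not_lt.mp h
  refine le_trans (eM_mono hptw x) ?_
  refine le_trans (eM_add_le _ _ (hu.ite (measurableSet_lt measurable_const hu)
    measurable_const) x) ?_
  exact add_le_add_right (eM_le_const (fun _ => le_rfl) x) _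

def Cq (q : ℝ) : ℝ≥0∞ := 216 * (2:ℝ≥0∞) ^ (3*q) * (1 - (2:ℝ≥0∞) ^ (1-q))⁻¹

/-- weighted strong type inequality (Fefferman–Stein) -/
theorem eM_strong {u w : X3 → ℝ≥0∞} (hu : Measurable u) (hw : Measurable w)
    {q : ℝ} (hq : 1 < q) :
    ∫⁻ x, (eM u x) ^ q * w x ≤ Cq q * ∫⁻ x, (u x) ^ q * eM w x := by
  classical
  set T := ∫⁻ x, (u x) ^ q * eM w x with hT
  -- truncated functions
  set U : ℤ → X3 → ℝ≥0∞ :=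
    fun k y => if (2:ℝ≥0∞) ^ ((k:ℝ) - 1) < u y then u y else 0 with hU
  have hUmeas : ∀ k, Measurable (U k) :=
    fun k => hu.ite (measurableSet_lt measurable_const hu) measurable_const
  -- level sets of eM u
  have hMeM := eM_measurable hu
  -- step 1: pointwise dyadic bound and tsum exchange
  have step1 : ∫⁻ x, (eM u x) ^ q * w x
      ≤ (2:ℝ≥0∞) ^ (2*q) * ∑' k : ℤ, ((2:ℝ≥0∞) ^ ((k:ℝ))) ^ q *
          ∫⁻ x in {x | (2:ℝ≥0∞) ^ ((k:ℝ)) < eM u x}, w x := by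
    have hptw : ∀ x, (eM u x) ^ q * w x ≤ (2:ℝ≥0∞) ^ (2*q) *
        ∑' k : ℤ, (if (2:ℝ≥0∞) ^ ((k:ℝ)) < eM u x then ((2:ℝ≥0∞) ^ ((k:ℝ))) ^ q else 0)
          * w x := by
      intro x
      calc (eM u x) ^ q * w x
          ≤ ((2:ℝ≥0∞) ^ (2*q) *
            ∑' k : ℤ, (if (2:ℝ≥0∞) ^ ((k:ℝ)) < eM u x then ((2:ℝ≥0∞) ^ ((k:ℝ))) ^ q else 0))
              * w x := mul_le_mul_left (pointwise_dyadic (by linarith) _) _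
        _ = _ := by rw [mul_assoc, ← ENNReal.tsum_mul_right]
    refine le_trans (lintegral_mono hptw) ?_
    rw [lintegral_const_mul _ (by
      refine Measurable.ennreal_tsum fun k => ?_
      exact (Measurable.ite (measurableSet_lt measurable_const hMeM) measurable_const
        measurable_const).mul hw)]
    refine mul_le_mul_right ?_ _
    have hrw : ∀ x, (∑' k : ℤ, (if (2:ℝ≥0∞) ^ ((k:ℝ)) < eM u x
        then ((2:ℝ≥0∞) ^ ((k:ℝ))) ^ q else 0) * w x)
        = ∑' k : ℤ, {x | (2:ℝ≥0∞) ^ ((k:ℝ)) < eM u x}.indicator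
            (fun x => ((2:ℝ≥0∞) ^ ((k:ℝ))) ^ q * w x) x := by
      intro x
      refine tsum_congr fun k => ?_
      by_cases h : (2:ℝ≥0∞) ^ ((k:ℝ)) < eM u x
      · rw [if_pos h, Set.indicator_of_mem
          (show x ∈ {x | (2:ℝ≥0∞) ^ ((k:ℝ)) < eM u x} from h)]
      · rw [if_neg h, Set.indicator_of_notMem
          (show x ∉ {x | (2:ℝ≥0∞) ^ ((k:ℝ)) < eM u x} from h), zero_mul]
    rw [lintegral_congr hrw]
    rw [lintegral_tsum (fun k => ((Measurable.indicator
      (hw.const_mul _) (measurableSet_lt measurable_const hMeM)).aemeasurable))]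
    refine ENNReal.tsum_le_tsum fun k => ?_
    rw [lintegral_indicator (measurableSet_lt measurable_const hMeM)]
    rw [lintegral_const_mul _ hw]
  -- step 2 : weak type bound on each level set
  have step2 : ∀ k : ℤ, ∫⁻ x in {x | (2:ℝ≥0∞) ^ ((k:ℝ)) < eM u x}, w x
      ≤ ((2:ℝ≥0∞) ^ ((k:ℝ) - 1))⁻¹ * (216 * ∫⁻ x, U k x * eM w x) := by
    intro k
    set a := (2:ℝ≥0∞) ^ ((k:ℝ) - 1) with ha
    have ha0 : a ≠ 0 := e2_ne_zero _
    have hat : a ≠ ⊤ := e2_ne_top _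
    have hsub : {x | (2:ℝ≥0∞) ^ ((k:ℝ)) < eM u x} ⊆ {x | a < eM (U k) x} := by
      intro x hx
      simp only [mem_setOf_eq] at hx ⊢
      have h2k : (2:ℝ≥0∞) ^ ((k:ℝ)) = a + a := by
        have h := ENNReal.rpow_add (x := (2:ℝ≥0∞)) 1 ((k:ℝ) - 1) (by norm_num) (by norm_num)
        rw [ENNReal.rpow_one, show (1:ℝ) + ((k:ℝ) - 1) = (k:ℝ) by ring] at h
        rw [h, two_mul]
      have := lt_of_lt_of_le (h2k ▸ hx) (eM_trunc hu a x)
      exact (ENNReal.add_lt_add_iff_right hat).mp this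
    calc ∫⁻ x in {x | (2:ℝ≥0∞) ^ ((k:ℝ)) < eM u x}, w x
        ≤ ∫⁻ x in {x | a < eM (U k) x}, w x := lintegral_mono_set hsub
      _ = a⁻¹ * (a * ∫⁻ x in {x | a < eM (U k) x}, w x) := by
          rw [← mul_assoc, ENNReal.inv_mul_cancel ha0 hat, one_mul]
      _ ≤ a⁻¹ * (216 * ∫⁻ x, U k x * eM w x) :=
          mul_le_mul_right (eM_weak (hUmeas k) hw a) _
  -- step 3: put everything together
  have hUm2 : ∀ k : ℤ, Measurable fun x =>
      (2:ℝ≥0∞) ^ ((k:ℝ) * q - (k:ℝ) + 1) * (U k x * eM w x) :=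
    fun k => (measurable_const.mul ((hUmeas k).mul (eM_measurable hw)))
  calc ∫⁻ x, (eM u x) ^ q * w x
      ≤ (2:ℝ≥0∞) ^ (2*q) * ∑' k : ℤ, ((2:ℝ≥0∞) ^ ((k:ℝ))) ^ q *
          ∫⁻ x in {x | (2:ℝ≥0∞) ^ ((k:ℝ)) < eM u x}, w x := step1
    _ ≤ (2:ℝ≥0∞) ^ (2*q) * ∑' k : ℤ, ((2:ℝ≥0∞) ^ ((k:ℝ))) ^ q *
          (((2:ℝ≥0∞) ^ ((k:ℝ) - 1))⁻¹ * (216 * ∫⁻ x, U k x * eM w x)) :=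
        mul_le_mul_right (ENNReal.tsum_le_tsum fun k => mul_le_mul_right (step2 k) _) _
    _ = (2:ℝ≥0∞) ^ (2*q) * (216 * ∑' k : ℤ,
          (2:ℝ≥0∞) ^ ((k:ℝ) * q - (k:ℝ) + 1) * ∫⁻ x, U k x * eM w x) := by
        rw [← ENNReal.tsum_mul_left (a := (216:ℝ≥0∞))]
        congr 1
        refine tsum_congr fun k => ?_
        have e1 : ((2:ℝ≥0∞) ^ ((k:ℝ))) ^ q = 2 ^ ((k:ℝ) * q) := (ENNReal.rpow_mul 2 _ _).symm
        have e2 : ((2:ℝ≥0∞) ^ ((k:ℝ) - 1))⁻¹ = 2 ^ (-((k:ℝ) - 1)) :=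
          (ENNReal.rpow_neg 2 _).symm
        have e3 : (2:ℝ≥0∞) ^ ((k:ℝ) * q) * 2 ^ (-((k:ℝ) - 1))
            = 2 ^ ((k:ℝ) * q - (k:ℝ) + 1) := by
          rw [← ENNReal.rpow_add _ _ (by norm_num) (by norm_num)]
          congr 1; ring
        rw [e1, e2]
        calc (2:ℝ≥0∞) ^ ((k:ℝ) * q) * (2 ^ (-((k:ℝ) - 1)) * (216 * ∫⁻ x, U k x * eM w x))
            = 216 * (((2:ℝ≥0∞) ^ ((k:ℝ) * q) * 2 ^ (-((k:ℝ) - 1)))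
                * ∫⁻ x, U k x * eM w x) := by ring
          _ = 216 * ((2:ℝ≥0∞) ^ ((k:ℝ) * q - (k:ℝ) + 1) * ∫⁻ x, U k x * eM w x) := by
              rw [e3]
    _ = (2:ℝ≥0∞) ^ (2*q) * (216 * ∫⁻ x,
          (∑' k : ℤ, (2:ℝ≥0∞) ^ ((k:ℝ) * q - (k:ℝ) + 1) * U k x) * eM w x) := by
        congr 2
        calc ∑' k : ℤ, (2:ℝ≥0∞) ^ ((k:ℝ) * q - (k:ℝ) + 1) * ∫⁻ x, U k x * eM w x
            = ∑' k : ℤ, ∫⁻ x, (2:ℝ≥0∞) ^ ((k:ℝ) * q - (k:ℝ) + 1) * (U k x * eM w x) :=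
              tsum_congr fun k =>
                (lintegral_const_mul _ ((hUmeas k).mul (eM_measurable hw))).symm
          _ = ∫⁻ x, ∑' k : ℤ, (2:ℝ≥0∞) ^ ((k:ℝ) * q - (k:ℝ) + 1) * (U k x * eM w x) :=
              (lintegral_tsum (fun k => (hUm2 k).aemeasurable)).symm
          _ = ∫⁻ x, (∑' k : ℤ, (2:ℝ≥0∞) ^ ((k:ℝ) * q - (k:ℝ) + 1) * U k x) * eM w x := by
              refine lintegral_congr fun x => ?_
              rw [← ENNReal.tsum_mul_right]
              exact tsum_congr fun k => by rw [mul_assoc]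
    _ ≤ (2:ℝ≥0∞) ^ (2*q) * (216 * ∫⁻ x,
          ((2:ℝ≥0∞) ^ q * (1 - (2:ℝ≥0∞) ^ (1 - q))⁻¹ * (u x) ^ q) * eM w x) := by
        refine mul_le_mul_right (mul_le_mul_right (lintegral_mono fun x => ?_) _) _
        exact mul_le_mul_left (dyadic_sum_bound hq (u x)) _
    _ = Cq q * T := by
        have hmul : ∀ x, ((2:ℝ≥0∞) ^ q * (1 - (2:ℝ≥0∞) ^ (1 - q))⁻¹ * (u x) ^ q) * eM w x
            = ((2:ℝ≥0∞) ^ q * (1 - (2:ℝ≥0∞) ^ (1 - q))⁻¹) * ((u x) ^ q * eM w x) := by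
          intro x; ring
        rw [lintegral_congr hmul,
          lintegral_const_mul _ (f := fun x => u x ^ q * eM w x) ((hu.pow_const q).mul (eM_measurable hw))]
        have h3q : (2:ℝ≥0∞) ^ (2*q) * 2 ^ q = 2 ^ (3*q) := by
          rw [← ENNReal.rpow_add _ _ (by norm_num) (by norm_num)]
          congr 1; ring
        rw [Cq, ← h3q, ← hT]
        ring

/-- unweighted strong type -/
lemma eM_strong_one {u : X3 → ℝ≥0∞} (hu : Measurable u) {s : ℝ} (hs : 1 < s) :
    ∫⁻ x, (eM u x) ^ s ≤ Cq s * ∫⁻ x, (u x) ^ s := by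
  have h := eM_strong hu (measurable_const (a := (1:ℝ≥0∞))) hs
  calc ∫⁻ x, (eM u x) ^ s = ∫⁻ x, (eM u x) ^ s * (1:ℝ≥0∞) := by
        refine lintegral_congr fun x => (mul_one _).symm
    _ ≤ Cq s * ∫⁻ x, (u x) ^ s * eM (fun _ => (1:ℝ≥0∞)) x := h
    _ ≤ Cq s * ∫⁻ x, (u x) ^ s := by
        refine mul_le_mul_right (lintegral_mono fun x => ?_) _
        calc (u x) ^ s * eM (fun _ => (1:ℝ≥0∞)) x ≤ (u x) ^ s * 1 :=
              mul_le_mul_right (eM_le_const (fun _ => le_rfl) x) _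
          _ = (u x) ^ s := mul_one _

lemma Cq_ne_top {s : ℝ} (hs : 1 < s) : Cq s ≠ ⊤ := by
  rw [Cq]
  refine ENNReal.mul_ne_top (ENNReal.mul_ne_top (by norm_num) (e2_ne_top _)) ?_
  refine ENNReal.inv_ne_top.mpr ?_
  rw [ne_eq, tsub_eq_zero_iff_le, not_le]
  have := ENNReal.rpow_lt_rpow_of_exponent_lt (x := 2) (y := 1 - s) (z := 0)
    (by norm_num) (by norm_num) (by linarith)
  simpa using this

lemma Cq_ne_zero {s : ℝ} (hs : 1 < s) : Cq s ≠ 0 := by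
  rw [Cq]
  refine mul_ne_zero (mul_ne_zero (by norm_num) (e2_ne_zero _)) ?_
  simp only [ne_eq, ENNReal.inv_eq_zero]
  exact (lt_of_le_of_lt tsub_le_self (by norm_num : (1:ℝ≥0∞) < ⊤)).ne

/-- `(∑ a)^q ≤ n^(q-1) ∑ a^q` -/
lemma sum_rpow_le_card_mul {ι : Type*} (t : Finset ι) (a : ι → ℝ≥0∞) {q : ℝ} (hq : 1 ≤ q) :
    (∑ i ∈ t, a i) ^ q ≤ (t.card : ℝ≥0∞) ^ (q - 1) * ∑ i ∈ t, (a i) ^ q := by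
  rcases Finset.eq_empty_or_nonempty t with rfl | hne
  · simp [ENNReal.zero_rpow_of_pos (by linarith : (0:ℝ) < q)]
  set n : ℝ≥0∞ := (t.card : ℝ≥0∞) with hn
  have hn0 : n ≠ 0 := by
    simp only [hn, ne_eq, Nat.cast_eq_zero]
    exact Finset.card_ne_zero_of_mem hne.choose_spec
  have hnt : n ≠ ⊤ := ENNReal.natCast_ne_top _
  have hw : ∑ _i ∈ t, n⁻¹ = 1 := by
    rw [Finset.sum_const, nsmul_eq_mul, hn, ENNReal.mul_inv_cancel hn0 hnt]
  have hmean := ENNReal.rpow_arith_mean_le_arith_mean_rpow t (fun _ => n⁻¹) a hw hq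
  have hL : ∑ i ∈ t, n⁻¹ * a i = n⁻¹ * ∑ i ∈ t, a i := (Finset.mul_sum _ _ _).symm
  have hR : ∑ i ∈ t, n⁻¹ * (a i) ^ q = n⁻¹ * ∑ i ∈ t, (a i) ^ q := (Finset.mul_sum _ _ _).symm
  rw [hL, hR, ENNReal.mul_rpow_of_nonneg _ _ (by linarith)] at hmean
  have hcan : n ^ q * (n⁻¹ ^ q * (∑ i ∈ t, a i) ^ q) = (∑ i ∈ t, a i) ^ q := by
    rw [← mul_assoc, ← ENNReal.mul_rpow_of_nonneg _ _ (by linarith : (0:ℝ) ≤ q),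
      ENNReal.mul_inv_cancel hn0 hnt, ENNReal.one_rpow, one_mul]
  calc (∑ i ∈ t, a i) ^ q = n ^ q * (n⁻¹ ^ q * (∑ i ∈ t, a i) ^ q) := hcan.symm
    _ ≤ n ^ q * (n⁻¹ * ∑ i ∈ t, (a i) ^ q) := mul_le_mul_right hmean _
    _ = (n ^ q * n⁻¹) * ∑ i ∈ t, (a i) ^ q := by ring
    _ = n ^ (q - 1) * ∑ i ∈ t, (a i) ^ q := by
        congr 1
        have : n ^ q = n ^ (q - 1) * n := by
          have h := ENNReal.rpow_add_of_nonneg (x := n) (q - 1) 1 (by linarith) zero_le_one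
          rw [ENNReal.rpow_one, show q - 1 + 1 = q by ring] at h
          exact h
        rw [this, mul_assoc, ENNReal.mul_inv_cancel hn0 hnt, mul_one]

/-- `∑ a^q ≤ (∑ a)^q` -/
lemma rpow_sum_le_sum_rpow {ι : Type*} (t : Finset ι) (a : ι → ℝ≥0∞) {q : ℝ} (hq : 1 ≤ q) :
    ∑ i ∈ t, (a i) ^ q ≤ (∑ i ∈ t, a i) ^ q := by
  set S := ∑ i ∈ t, a i with hS
  have hterm : ∀ i ∈ t, (a i) ^ q ≤ S ^ (q - 1) * a i := by
    intro i hi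
    have hle : a i ≤ S := Finset.single_le_sum (fun j _ => zero_le) hi
    calc (a i) ^ q = (a i) ^ (q - 1) * a i := by
          have h := ENNReal.rpow_add_of_nonneg (x := a i) (q - 1) 1 (by linarith) zero_le_one
          rw [ENNReal.rpow_one, show q - 1 + 1 = q by ring] at h
          exact h
      _ ≤ S ^ (q - 1) * a i :=
          mul_le_mul_left (ENNReal.rpow_le_rpow hle (by linarith)) _
  calc ∑ i ∈ t, (a i) ^ q ≤ ∑ i ∈ t, S ^ (q - 1) * a i := Finset.sum_le_sum hterm
    _ = S ^ (q - 1) * S := by rw [← Finset.mul_sum]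
    _ = S ^ q := by
        have h := ENNReal.rpow_add_of_nonneg (x := S) (q - 1) 1 (by linarith) zero_le_one
        rw [ENNReal.rpow_one, show q - 1 + 1 = q by ring] at h
        exact h.symm


end Aux

/-- For any `N` functions `g_1, …, g_N` on `ℝ³` and every `ε > 0`,
`‖Σ_m M g_m‖_{L^{10/3}} ≤ C_ε N^ε ‖Σ_m |g_m|‖_{L^{10/3}}`, with `C_ε` independent of `N`
and of the `g_m`. -/
theorem sum_of_maximal_functions (ε : ℝ) (hε : 0 < ε) :
    ∃ C > (0:ℝ), ∀ (N : ℕ) (g : Fin N → (EuclideanSpace ℝ (Fin 3) → ℝ)),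
      (∀ m, Measurable (g m)) →
      (∫⁻ x : EuclideanSpace ℝ (Fin 3),
          (∑ m, HLmax (g m) x) ^ ((10:ℝ)/3) ∂volume) ^ ((3:ℝ)/10) ≤
        ENNReal.ofReal (C * (N : ℝ) ^ ε) *
          (∫⁻ x : EuclideanSpace ℝ (Fin 3),
            (ENNReal.ofReal (∑ m, |g m x|)) ^ ((10:ℝ)/3) ∂volume) ^ ((3:ℝ)/10) := by
  classical
  set q : ℝ := 1 + min ε 1 with hqdef
  have hq1 : 1 < q := by
    have : 0 < min ε 1 := lt_min hε one_pos
    simp only [hqdef]; linarith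
  have hq0 : 0 < q := by linarith
  have hq2 : q ≤ 2 := by
    have : min ε 1 ≤ 1 := min_le_right _ _
    simp only [hqdef]; linarith
  set p : ℝ := 10/3 with hpdef
  have hp1 : 1 < p := by norm_num [hpdef]
  have hp0 : 0 < p := by linarith
  have hqp : q < p := by simp only [hpdef]; linarith
  have hpq0 : 0 < p - q := by linarith
  set s : ℝ := p / (p - q) with hsdef
  have hs1 : 1 < s := (one_lt_div hpq0).mpr (by linarith)
  have hs0 : 0 < s := by linarith
  have hconj : (p/q).HolderConjugate s := by
    rw [Real.holderConjugate_iff]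
    constructor
    · exact (one_lt_div hq0).mpr hqp
    · rw [hsdef]
      rw [inv_div, inv_div, ← add_div, show q + (p - q) = p by ring,
        div_self hp0.ne']
  set D : ℝ≥0∞ := (Cq q * (Cq s) ^ (1/s)) ^ (1/q) with hD
  have hDt : D ≠ ⊤ :=
    ENNReal.rpow_ne_top_of_nonneg (by positivity)
      (ENNReal.mul_ne_top (Cq_ne_top hq1)
        (ENNReal.rpow_ne_top_of_nonneg (by positivity) (Cq_ne_top hs1)))
  refine ⟨D.toReal + 1, by positivity, ?_⟩
  intro N g hg
  rcases Nat.eq_zero_or_pos N with rfl | hN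
  · simp [ENNReal.zero_rpow_of_pos hp0, ENNReal.zero_rpow_of_pos (show (0:ℝ) < 10/3 by norm_num),
      ENNReal.zero_rpow_of_pos (show (0:ℝ) < 3/10 by norm_num)]
  have h1N : (1:ℝ) ≤ (N:ℝ) := by exact_mod_cast hN
  set u : Fin N → X3 → ℝ≥0∞ := fun m y => ENNReal.ofReal |g m y| with hu
  have hum : ∀ m, Measurable (u m) := fun m => ENNReal.measurable_ofReal.comp (hg m).abs
  set G : X3 → ℝ≥0∞ := fun x => ∑ m, u m x with hG
  have hGm : Measurable G := Finset.measurable_sum _ fun m _ => hum m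
  set F : X3 → ℝ≥0∞ := fun x => ∑ m, eM (u m) x with hF
  have hFm : Measurable F := Finset.measurable_sum _ fun m _ => eM_measurable (hum m)
  set A := ∫⁻ x, F x ^ p with hA
  set B := ∫⁻ x, G x ^ p with hB
  have hLHSeq : (∫⁻ x : X3, (∑ m, HLmax (g m) x) ^ ((10:ℝ)/3)) = A := rfl
  have hRHSeq : (∫⁻ x : X3, (ENNReal.ofReal (∑ m, |g m x|)) ^ ((10:ℝ)/3)) = B := by
    rw [hB]
    refine lintegral_congr fun x => ?_
    rw [ENNReal.ofReal_sum_of_nonneg fun m _ => abs_nonneg _]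
  rw [hLHSeq, hRHSeq]
  have hCpos : (0:ℝ) < (D.toReal + 1) * (N:ℝ) ^ ε := by positivity
  rcases eq_or_ne B ⊤ with hBtop | hBtop
  · rw [hBtop, ENNReal.top_rpow_of_pos (by norm_num : (0:ℝ) < 3/10),
      ENNReal.mul_top (ENNReal.ofReal_pos.mpr hCpos).ne']
    exact le_top
  -- a priori finiteness of A
  have hFle : ∀ x, F x ≤ (N:ℝ≥0∞) * eM G x := by
    intro x
    calc F x ≤ ∑ _m : Fin N, eM G x :=
          Finset.sum_le_sum fun m _ => eM_mono
            (fun y => Finset.single_le_sum (f := fun j => u j y)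
              (fun j _ => zero_le) (Finset.mem_univ m)) x
      _ = (N:ℝ≥0∞) * eM G x := by
          rw [Finset.sum_const, nsmul_eq_mul, Finset.card_univ, Fintype.card_fin]
  have hAtop : A ≠ ⊤ := by
    have hbound : A ≤ (N:ℝ≥0∞) ^ p * (Cq p * B) := by
      calc A ≤ ∫⁻ x, ((N:ℝ≥0∞) * eM G x) ^ p :=
            lintegral_mono fun x => ENNReal.rpow_le_rpow (hFle x) hp0.le
        _ = (N:ℝ≥0∞) ^ p * ∫⁻ x, (eM G x) ^ p := by
            rw [← lintegral_const_mul _ ((eM_measurable hGm).pow_const _)]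
            exact lintegral_congr fun x => ENNReal.mul_rpow_of_nonneg _ _ hp0.le
        _ ≤ (N:ℝ≥0∞) ^ p * (Cq p * B) := mul_le_mul_right (eM_strong_one hGm hp1) _
    exact ne_top_of_le_ne_top (ENNReal.mul_ne_top
      (ENNReal.rpow_ne_top_of_nonneg hp0.le (ENNReal.natCast_ne_top N))
      (ENNReal.mul_ne_top (Cq_ne_top hp1) hBtop)) hbound
  -- main chain
  set W : X3 → ℝ≥0∞ := fun x => F x ^ (p - q) with hW
  have hWm : Measurable W := hFm.pow_const _
  have main : A ≤ ((N:ℝ≥0∞) ^ (q-1) * (Cq q * (Cq s) ^ (1/s))) * (B ^ (q/p) * A ^ (1/s)) := by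
    have hApt : ∀ x, F x ^ p = F x ^ q * W x := by
      intro x
      have h := ENNReal.rpow_add_of_nonneg (x := F x) q (p - q) hq0.le hpq0.le
      rw [show q + (p - q) = p by ring] at h
      exact h
    have hHolder : ∫⁻ x, G x ^ q * eM W x
        ≤ B ^ (q/p) * (∫⁻ x, (eM W x) ^ s) ^ (1/s) := by
      have h := ENNReal.lintegral_mul_le_Lp_mul_Lq volume hconj
        (f := fun x => G x ^ q) (g := fun x => eM W x)
        ((hGm.pow_const _).aemeasurable) ((eM_measurable hWm).aemeasurable)
      have h2 : (∫⁻ x, (G x ^ q) ^ (p/q)) = B := by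
        refine lintegral_congr fun x => ?_
        rw [← ENNReal.rpow_mul, show q * (p/q) = p by field_simp]
      rw [h2, one_div_div] at h
      exact h
    have hWs : (∫⁻ x, (eM W x) ^ s) ≤ Cq s * A := by
      refine le_trans (eM_strong_one hWm hs1) (mul_le_mul_right (le_of_eq ?_) _)
      refine lintegral_congr fun x => ?_
      rw [hW, ← ENNReal.rpow_mul, show (p - q) * s = p by rw [hsdef]; field_simp]
    calc A = ∫⁻ x, F x ^ q * W x := lintegral_congr hApt
      _ ≤ ∫⁻ x, ((N:ℝ≥0∞) ^ (q-1) * ∑ m, (eM (u m) x) ^ q) * W x := by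
          refine lintegral_mono fun x => mul_le_mul_left ?_ _
          have := sum_rpow_le_card_mul Finset.univ (fun m => eM (u m) x) hq1.le
          rwa [Finset.card_univ, Fintype.card_fin] at this
      _ = (N:ℝ≥0∞) ^ (q-1) * ∑ m, ∫⁻ x, (eM (u m) x) ^ q * W x := by
          rw [← lintegral_finset_sum _ (f := fun m x => eM (u m) x ^ q * W x) (fun m _ =>
            ((eM_measurable (hum m)).pow_const _).mul hWm)]
          rw [← lintegral_const_mul _ (f := fun x => ∑ m, eM (u m) x ^ q * W x) (Finset.measurable_sum _ fun m _ =>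
            ((eM_measurable (hum m)).pow_const _).mul hWm)]
          refine lintegral_congr fun x => ?_
          rw [mul_assoc, Finset.sum_mul]
      _ ≤ (N:ℝ≥0∞) ^ (q-1) * ∑ m, (Cq q * ∫⁻ x, (u m x) ^ q * eM W x) :=
          mul_le_mul_right (Finset.sum_le_sum fun m _ => eM_strong (hum m) hWm hq1) _
      _ = ((N:ℝ≥0∞) ^ (q-1) * Cq q) * ∫⁻ x, (∑ m, (u m x) ^ q) * eM W x := by
          rw [← Finset.mul_sum, ← mul_assoc]
          congr 1
          rw [← lintegral_finset_sum _ (f := fun m x => u m x ^ q * eM W x) (fun m _ =>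
            ((hum m).pow_const _).mul (eM_measurable hWm))]
          refine lintegral_congr fun x => ?_
          rw [Finset.sum_mul]
      _ ≤ ((N:ℝ≥0∞) ^ (q-1) * Cq q) * ∫⁻ x, G x ^ q * eM W x := by
          refine mul_le_mul_right (lintegral_mono fun x => mul_le_mul_left ?_ _) _
          exact rpow_sum_le_sum_rpow Finset.univ (fun m => u m x) hq1.le
      _ ≤ ((N:ℝ≥0∞) ^ (q-1) * Cq q) * (B ^ (q/p) * (∫⁻ x, (eM W x) ^ s) ^ (1/s)) :=
          mul_le_mul_right hHolder _
      _ ≤ ((N:ℝ≥0∞) ^ (q-1) * Cq q) * (B ^ (q/p) * (Cq s * A) ^ (1/s)) :=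
          mul_le_mul_right (mul_le_mul_right
            (ENNReal.rpow_le_rpow hWs (by positivity)) _) _
      _ = ((N:ℝ≥0∞) ^ (q-1) * (Cq q * (Cq s) ^ (1/s))) * (B ^ (q/p) * A ^ (1/s)) := by
          rw [ENNReal.mul_rpow_of_nonneg _ _ (by positivity : (0:ℝ) ≤ 1/s)]
          ring
  -- cancel A^{1/s}
  rcases eq_or_ne A 0 with hA0 | hA0
  · rw [hA0, ENNReal.zero_rpow_of_pos (by norm_num : (0:ℝ) < 3/10)]
    exact zero_le
  have hAq : A ^ (q/p) ≤ (N:ℝ≥0∞) ^ (q-1) * (Cq q * (Cq s) ^ (1/s)) * B ^ (q/p) := by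
    have hsplit : A = A ^ (q/p) * A ^ (1/s) := by
      have h := ENNReal.rpow_add_of_nonneg (x := A) (q/p) (1/s) (by positivity)
        (by positivity)
      rw [show q/p + 1/s = 1 by
        rw [hsdef, one_div_div, ← add_div, show q + (p - q) = p by ring,
          div_self hp0.ne'], ENNReal.rpow_one] at h
      exact h
    have hc1 : A ^ ((1:ℝ)/s) ≠ 0 := by
      simp only [ne_eq, ENNReal.rpow_eq_zero_iff, not_or, not_and]
      exact ⟨fun h => absurd h hA0, fun h => absurd h hAtop⟩
    have hc2 : A ^ ((1:ℝ)/s) ≠ ⊤ := ENNReal.rpow_ne_top_of_nonneg (by positivity) hAtop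
    have := main
    rw [hsplit, ← mul_assoc] at this
    exact (ENNReal.mul_le_mul_iff_left hc1 hc2).mp (by
      calc A ^ (q/p) * A ^ (1/s)
          ≤ (N:ℝ≥0∞) ^ (q-1) * (Cq q * (Cq s) ^ (1/s)) * B ^ (q/p) * A ^ (1/s) := by
            rw [mul_assoc ((N:ℝ≥0∞) ^ (q-1) * (Cq q * (Cq s) ^ (1/s))) (B ^ (q/p)) (A ^ (1/s))]
            exact hsplit ▸ main)
  -- raise to power 1/q and estimate the constant
  have hfinal : A ^ ((3:ℝ)/10) ≤ (ENNReal.ofReal ((N:ℝ) ^ ε) * ENNReal.ofReal (D.toReal + 1))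
      * B ^ ((3:ℝ)/10) := by
    have h310 : ((3:ℝ)/10) = 1/p := by rw [hpdef]; norm_num
    have hstep : A ^ ((1:ℝ)/p) ≤ ((N:ℝ≥0∞) ^ (q-1) * (Cq q * (Cq s) ^ (1/s)) * B ^ (q/p))
        ^ ((1:ℝ)/q) := by
      have h1 : A ^ ((1:ℝ)/p) = (A ^ (q/p)) ^ ((1:ℝ)/q) := by
        rw [← ENNReal.rpow_mul]
        congr 1
        field_simp
      rw [h1]
      exact ENNReal.rpow_le_rpow hAq (by positivity)
    have hexpand : ((N:ℝ≥0∞) ^ (q-1) * (Cq q * (Cq s) ^ (1/s)) * B ^ (q/p)) ^ ((1:ℝ)/q)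
        = (N:ℝ≥0∞) ^ ((q-1) * (1/q)) * D * B ^ ((1:ℝ)/p) := by
      rw [ENNReal.mul_rpow_of_nonneg _ _ (by positivity : (0:ℝ) ≤ 1/q),
        ENNReal.mul_rpow_of_nonneg _ _ (by positivity : (0:ℝ) ≤ 1/q),
        ← ENNReal.rpow_mul, ← ENNReal.rpow_mul, hD]
      congr 2
      field_simp
    have hN_bound : (N:ℝ≥0∞) ^ ((q-1) * (1/q)) ≤ ENNReal.ofReal ((N:ℝ) ^ ε) := by
      have hγ : (q-1) * (1/q) ≤ ε := by
        have h1 : (q-1) * (1/q) ≤ q - 1 := by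
          have : (1:ℝ)/q ≤ 1 := by
            rw [div_le_one hq0]; linarith
          nlinarith
        have h2 : q - 1 ≤ ε := by
          simp only [hqdef]
          have : min ε 1 ≤ ε := min_le_left _ _
          linarith
        linarith
      calc (N:ℝ≥0∞) ^ ((q-1) * (1/q)) = ENNReal.ofReal ((N:ℝ) ^ ((q-1) * (1/q))) := by
            rw [← ENNReal.ofReal_rpow_of_pos (by positivity), ENNReal.ofReal_natCast]
        _ ≤ ENNReal.ofReal ((N:ℝ) ^ ε) :=
            ENNReal.ofReal_le_ofReal (Real.rpow_le_rpow_of_exponent_le h1N hγ)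
    have hD_bound : D ≤ ENNReal.ofReal (D.toReal + 1) := by
      calc D = ENNReal.ofReal D.toReal := (ENNReal.ofReal_toReal hDt).symm
        _ ≤ ENNReal.ofReal (D.toReal + 1) := ENNReal.ofReal_le_ofReal (by linarith)
    rw [h310]
    calc A ^ ((1:ℝ)/p)
        ≤ (N:ℝ≥0∞) ^ ((q-1) * (1/q)) * D * B ^ ((1:ℝ)/p) := hexpand ▸ hstep
      _ ≤ (ENNReal.ofReal ((N:ℝ) ^ ε) * ENNReal.ofReal (D.toReal + 1)) * B ^ ((1:ℝ)/p) :=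
          mul_le_mul_left (mul_le_mul' hN_bound hD_bound) _
  refine le_trans hfinal (le_of_eq ?_)
  congr 1
  rw [← ENNReal.ofReal_mul (by positivity)]
  congr 1
  ring


end
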